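/- Let f : ℝ^n → ℝ be a convex polynomial function and let P = {x ∈ ℝ^n : A x ≤ b} be a nonempty polyhedron. Suppose there are a linear subspace U ⊆ ℝ^n, a vector w ∈ U^⊥, constants α ∈ ℝ, β ∈ ℝ^n, and μ > 0 such that for all x ∈ ℝ^n: f(x) = f(x_U) − ⟨w, x⟩ and f(x_U) ≥ α + ⟨β, x_U⟩ + (μ/2)·‖x_U‖². Then f is unbounded from below on P if and only if there exists x⁰ ∈ ℝ^n with A x⁰ ≤ 0 (componentwise), x⁰ ∈ U^⊥, and ⟨w, x⁰⟩ = 1. -/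

import Mathlib

open RealInnerProductSpace

section FarkasAux

variable {V : Type*} [NormedAddCommGroup V] [InnerProductSpace ℝ V]

/-- Membership in the convex cone generated by a list of vectors. -/
inductive InCone : List V → V → Prop
  | nil : InCone [] 0
  | cons (c : ℝ) (hc : 0 ≤ c) (a : V) {t : List V} {z : V} (h : InCone t z) :
      InCone (a :: t) (z + c • a)

lemma incone_zero_smul {l : List V} {w : V} (a : V) (h : InCone l w) :
    InCone (a :: l) w := by
  have := InCone.cons 0 le_rfl a h
  simpa using this

lemma incone_unmap (a : V) (φ : V → ℝ) :
    ∀ (t : List V) (z : V), InCone (t.map (fun v => v + φ v • a)) z →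
      (∀ v ∈ t, 0 ≤ φ v) → ∃ c : ℝ, 0 ≤ c ∧ InCone t (z - c • a) := by
  intro t
  induction t with
  | nil =>
    intro z hz _
    rw [List.map_nil] at hz
    cases hz
    exact ⟨0, le_rfl, by simpa using InCone.nil⟩
  | cons v t'' ih =>
    intro z hz hφ
    rw [List.map_cons] at hz
    cases hz with
    | cons c hc _ h' =>
      rename_i z₀
      have hφv : 0 ≤ φ v := hφ v (List.mem_cons_self)
      obtain ⟨c₁, hc₁, h₁⟩ := ih z₀ h' (fun u hu => hφ u (List.mem_cons_of_mem _ hu))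
      refine ⟨c₁ + c * φ v, by positivity, ?_⟩
      have h2 := InCone.cons c hc v h₁
      have heq : z₀ + c • (v + φ v • a) - (c₁ + c * φ v) • a = z₀ - c₁ • a + c • v := by
        module
      rw [heq]
      exact h2

/-- Farkas' lemma, in the form of a dichotomy: either `w` lies in the cone generated
by the list `l`, or there is a vector `d` making nonpositive inner product with every
generator and positive inner product with `w`. -/
lemma farkas (l : List V) (w : V) :
    InCone l w ∨ ∃ d : V, (∀ a ∈ l, ⟪a, d⟫ ≤ 0) ∧ 0 < ⟪w, d⟫ := by
  suffices H : ∀ (N : ℕ) (l : List V), l.length = N → ∀ w : V,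
      InCone l w ∨ ∃ d : V, (∀ a ∈ l, ⟪a, d⟫ ≤ 0) ∧ 0 < ⟪w, d⟫ from H l.length l rfl w
  intro N
  induction N with
  | zero =>
    intro l hl w
    rw [List.length_eq_zero_iff] at hl
    subst hl
    by_cases hw : w = 0
    · subst hw; exact Or.inl InCone.nil
    · exact Or.inr ⟨w, by simp, by
        rw [real_inner_self_eq_norm_mul_norm]
        exact mul_pos (norm_pos_iff.mpr hw) (norm_pos_iff.mpr hw)⟩
  | succ N ih =>
    intro l hl w
    obtain ⟨a, t, rfl⟩ : ∃ a t, l = a :: t := by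
      cases l with
      | nil => simp at hl
      | cons a t => exact ⟨a, t, rfl⟩
    have ht : t.length = N := by simpa using hl
    rcases ih t ht w with h | ⟨d, hd, hwd⟩
    · exact Or.inl (incone_zero_smul a h)
    · by_cases ha : ⟪a, d⟫ ≤ 0
      · refine Or.inr ⟨d, ?_, hwd⟩
        intro v hv
        rcases List.mem_cons.mp hv with rfl | hv
        · exact ha
        · exact hd v hv
      · push_neg at ha
        have had : ⟪a, d⟫ ≠ 0 := ne_of_gt ha
        set φ : V → ℝ := fun v => -(⟪v, d⟫ / ⟪a, d⟫) with hφ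
        have hφt : ∀ v ∈ t, 0 ≤ φ v := by
          intro v hv
          have h1 := hd v hv
          have : ⟪v, d⟫ / ⟪a, d⟫ ≤ 0 := div_nonpos_of_nonpos_of_nonneg h1 ha.le
          simpa [hφ] using this
        set t' : List V := t.map (fun v => v + φ v • a) with ht'
        set w' : V := w + φ w • a with hw'
        have ht'l : t'.length = N := by simp [ht', ht]
        rcases ih t' ht'l w' with h' | ⟨d', hd', hwd'⟩
        · left
          obtain ⟨c, hc, h2⟩ := incone_unmap a φ t w' h' hφt
          have hφw : φ w < 0 := by
            have : 0 < ⟪w, d⟫ / ⟪a, d⟫ := div_pos hwd ha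
            simp only [hφ]
            linarith
          have hge : 0 ≤ c - φ w := by linarith
          have h3 := InCone.cons (c - φ w) hge a h2
          have heq : w' - c • a + (c - φ w) • a = w := by rw [hw']; module
          rwa [heq] at h3
        · right
          set d'' : V := d' - (⟪a, d'⟫ / ⟪a, d⟫) • d with hd''
          refine ⟨d'', ?_, ?_⟩
          · intro v hv
            rcases List.mem_cons.mp hv with rfl | hv
            · rw [hd'', inner_sub_right, real_inner_smul_right]
              rw [div_mul_cancel₀ _ had]
              simp
            · have h1 := hd' (v + φ v • a) (List.mem_map_of_mem hv)
              rw [inner_add_left, real_inner_smul_left] at h1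
              rw [hd'', inner_sub_right, real_inner_smul_right]
              have : ⟪v, d'⟫ - ⟪a, d'⟫ / ⟪a, d⟫ * ⟪v, d⟫
                  = ⟪v, d'⟫ + φ v * ⟪a, d'⟫ := by
                rw [hφ]; field_simp; ring
              rw [this]; exact h1
          · rw [hw', inner_add_left, real_inner_smul_left] at hwd'
            rw [hd'', inner_sub_right, real_inner_smul_right]
            have : ⟪w, d'⟫ - ⟪a, d'⟫ / ⟪a, d⟫ * ⟪w, d⟫
                = ⟪w, d'⟫ + φ w * ⟪a, d'⟫ := by
              rw [hφ]; field_simp; ring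
            rw [this]; exact hwd'

/-- If `w` is in the cone generated by vectors each of which is either bounded (as a
linear functional) on `P` or belongs to `U`, then `⟪w, ·⟫` is bounded on `P` up to a
linear functional coming from `U`. -/
lemma incone_bound (U : Submodule ℝ V) (P : Set V) :
    ∀ {l : List V} {w : V}, InCone l w →
      (∀ a ∈ l, (∃ B' : ℝ, ∀ x ∈ P, ⟪a, x⟫ ≤ B') ∨ a ∈ U) →
      ∃ (B : ℝ) (u : V), u ∈ U ∧ ∀ x ∈ P, ⟪w, x⟫ ≤ B + ⟪u, x⟫ := by
  intro l w h
  induction h with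
  | nil => exact fun _ => ⟨0, 0, U.zero_mem, fun x _ => by simp⟩
  | cons c hc a h ih =>
    intro hmem
    obtain ⟨B, u, hu, hB⟩ := ih (fun v hv => hmem v (List.mem_cons_of_mem _ hv))
    rcases hmem a (List.mem_cons_self) with ⟨B', hrow⟩ | hU
    · refine ⟨B + c * B', u, hu, fun x hx => ?_⟩
      have h1 := hB x hx
      have h2 := hrow x hx
      rw [inner_add_left, real_inner_smul_left]
      nlinarith
    · refine ⟨B, u + c • a, U.add_mem hu (U.smul_mem c hU), fun x hx => ?_⟩
      have h1 := hB x hx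
      rw [inner_add_left, real_inner_smul_left, inner_add_left, real_inner_smul_left]
      linarith

end FarkasAux

/-- Given the structural decomposition of a convex polynomial `f`,
`f` is unbounded from below on the nonempty polyhedron `P = {x : Ax ≤ b}` if and only
if there is `x⁰` with `Ax⁰ ≤ 0`, `x⁰ ∈ U^⊥` and `⟨w, x⁰⟩ = 1`. -/
theorem unbounded_below_iff_recession_direction {n m : ℕ}
    (f : EuclideanSpace ℝ (Fin n) → ℝ)
    (hpoly : ∃ p : MvPolynomial (Fin n) ℝ, ∀ x, f x = MvPolynomial.eval (fun i => x i) p)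
    (hconv : ConvexOn ℝ Set.univ f)
    (A : Matrix (Fin m) (Fin n) ℝ) (b : Fin m → ℝ)
    (P : Set (EuclideanSpace ℝ (Fin n)))
    (hP : P = {x | ∀ i, A.mulVec (fun j => x j) i ≤ b i})
    (hne : P.Nonempty)
    (U : Submodule ℝ (EuclideanSpace ℝ (Fin n)))
    (w β : EuclideanSpace ℝ (Fin n)) (α μ : ℝ)
    (hw : w ∈ Uᗮ) (hμ : 0 < μ)
    (hdecomp : ∀ x, f x = f ((U.orthogonalProjection x : EuclideanSpace ℝ (Fin n))) - ⟪w, x⟫)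
    (hlb : ∀ x, α + ⟪β, (U.orthogonalProjection x : EuclideanSpace ℝ (Fin n))⟫
        + (μ / 2) * ‖(U.orthogonalProjection x : EuclideanSpace ℝ (Fin n))‖ ^ 2
        ≤ f ((U.orthogonalProjection x : EuclideanSpace ℝ (Fin n)))) :
    ¬ BddBelow (f '' P) ↔
      ∃ x0 : EuclideanSpace ℝ (Fin n),
        (∀ i, A.mulVec (fun j => x0 j) i ≤ 0) ∧ x0 ∈ Uᗮ ∧ ⟪w, x0⟫ = 1 := by
  classical
  -- the rows of `A` as vectors in Euclidean space
  set a : Fin m → EuclideanSpace ℝ (Fin n) :=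
    fun i => (WithLp.equiv 2 (Fin n → ℝ)).symm (A i) with ha
  have hbridge : ∀ (x : EuclideanSpace ℝ (Fin n)) (i : Fin m),
      A.mulVec (fun j => x j) i = ⟪a i, x⟫ := by
    intro x i
    simp [ha, Matrix.mulVec, dotProduct, PiLp.inner_apply, RCLike.inner_apply,
      starRingEnd_apply, mul_comm]
  constructor
  · -- hard direction: unbounded below implies recession direction
    intro hnb
    obtain ⟨s, hs⟩ := IsNoetherian.noetherian U
    set L : List (EuclideanSpace ℝ (Fin n)) :=
      (List.ofFn a ++ s.toList) ++ s.toList.map (fun v => -v) with hL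
    rcases farkas L w with hc | ⟨d, hd, hwd⟩
    · -- `w` is in the cone: `f` is bounded below on `P`, contradiction
      exfalso
      apply hnb
      have hmem : ∀ v ∈ L, (∃ B' : ℝ, ∀ x ∈ P, ⟪v, x⟫ ≤ B') ∨ v ∈ U := by
        intro v hv
        rw [hL, List.mem_append, List.mem_append] at hv
        rcases hv with (hv | hv) | hv
        · obtain ⟨i, rfl⟩ := List.mem_ofFn.mp hv
          refine Or.inl ⟨b i, fun x hx => ?_⟩
          rw [← hbridge]
          rw [hP] at hx
          exact hx i
        · refine Or.inr ?_
          rw [← hs]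
          exact Submodule.subset_span (by simpa using (Finset.mem_toList.mp hv))
        · obtain ⟨v', hv', rfl⟩ := List.mem_map.mp hv
          refine Or.inr (Submodule.neg_mem _ ?_)
          rw [← hs]
          exact Submodule.subset_span (by simpa using (Finset.mem_toList.mp hv'))
      obtain ⟨B, u, hu, hB⟩ := incone_bound U P hc hmem
      have key : ∀ p' : EuclideanSpace ℝ (Fin n),
          -(‖β - u‖ ^ 2 / (2 * μ)) ≤ ⟪β - u, p'⟫ + μ / 2 * ‖p'‖ ^ 2 := by
        intro p'
        have h1 := abs_real_inner_le_norm (β - u) p'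
        have h2 : ‖β - u‖ ^ 2 / (2 * μ) * (2 * μ) = ‖β - u‖ ^ 2 := by field_simp
        nlinarith [sq_nonneg (μ * ‖p'‖ - ‖β - u‖), abs_le.mp h1, norm_nonneg (β - u),
          norm_nonneg p']
      refine ⟨α - B - ‖β - u‖ ^ 2 / (2 * μ), ?_⟩
      rintro y ⟨x, hx, rfl⟩
      have h1 := hB x hx
      have h2 := hlb x
      have h3 := hdecomp x
      set xU : EuclideanSpace ℝ (Fin n) :=
        (U.orthogonalProjection x : EuclideanSpace ℝ (Fin n)) with hxU
      have h4 : ⟪u, x⟫ = ⟪u, xU⟫ := by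
        have h5 : x - xU ∈ Uᗮ := U.sub_starProjection_mem_orthogonal x
        have h6 := (Submodule.mem_orthogonal U _).mp h5 u hu
        rw [inner_sub_right] at h6
        linarith
      have hkey := key xU
      rw [inner_sub_left] at hkey
      linarith
    · -- we get a recession direction
      have hdA : ∀ i, ⟪a i, d⟫ ≤ 0 := by
        intro i
        refine hd (a i) ?_
        rw [hL, List.mem_append, List.mem_append]
        exact Or.inl (Or.inl (List.mem_ofFn.mpr ⟨i, rfl⟩))
      have hgen : ∀ v ∈ s, ⟪v, d⟫ = 0 := by
        intro v hv
        have h1 : ⟪v, d⟫ ≤ 0 := by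
          refine hd v ?_
          rw [hL, List.mem_append, List.mem_append]
          exact Or.inl (Or.inr (Finset.mem_toList.mpr hv))
        have h2 : ⟪-v, d⟫ ≤ 0 := by
          refine hd (-v) ?_
          rw [hL, List.mem_append]
          exact Or.inr (List.mem_map_of_mem (Finset.mem_toList.mpr hv))
        rw [inner_neg_left] at h2
        linarith
      have hdU : d ∈ Uᗮ := by
        rw [Submodule.mem_orthogonal]
        intro u hu
        rw [← hs] at hu
        refine Submodule.span_induction ?_ ?_ ?_ ?_ hu
        · intro v hv
          exact hgen v (by simpa using hv)
        · simp
        · intro x y _ _ hx hy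
          rw [inner_add_left, hx, hy, add_zero]
        · intro c x _ hx
          rw [real_inner_smul_left, hx, mul_zero]
      refine ⟨(⟪w, d⟫)⁻¹ • d, ?_, ?_, ?_⟩
      · intro i
        rw [hbridge, real_inner_smul_right]
        have h1 := hdA i
        have h2 : 0 < (⟪w, d⟫)⁻¹ := inv_pos.mpr hwd
        nlinarith
      · exact Submodule.smul_mem _ _ hdU
      · rw [real_inner_smul_right]
        exact inv_mul_cancel₀ (ne_of_gt hwd)
  · -- easy direction: a recession direction gives unboundedness
    rintro ⟨x0, hx0A, hx0U, hx0w⟩ hbdd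
    obtain ⟨p, hp⟩ := hne
    obtain ⟨c, hc⟩ := hbdd
    have hp' : ∀ i, A.mulVec (fun j => p j) i ≤ b i := by rw [hP] at hp; exact hp
    set t : ℝ := max 0 (f p - c + 1) with hts
    have ht0 : 0 ≤ t := le_max_left _ _
    have hmem : p + t • x0 ∈ P := by
      rw [hP]
      intro i
      have hb1 : A.mulVec (fun j => (p + t • x0) j) i
          = A.mulVec (fun j => p j) i + t * A.mulVec (fun j => x0 j) i := by
        rw [hbridge, hbridge, hbridge, inner_add_right, real_inner_smul_right]
      rw [hb1]
      have h2 := hx0A i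
      have h3 := hp' i
      nlinarith
    have hproj : U.orthogonalProjection (p + t • x0) = U.orthogonalProjection p := by
      have h0 : U.orthogonalProjection x0 = 0 :=
        Submodule.orthogonalProjectionOnto_apply_of_mem_orthogonal hx0U
      rw [map_add, map_smul, h0, smul_zero, add_zero]
    have hfval : f (p + t • x0) = f p - t := by
      rw [hdecomp (p + t • x0), hproj, hdecomp p]
      rw [inner_add_right, real_inner_smul_right, hx0w]
      ring
    have h5 : c ≤ f (p + t • x0) := hc ⟨p + t • x0, hmem, rfl⟩
    rw [hfval] at h5
    have h6 : f p - c + 1 ≤ t := le_max_right _ _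
    linarith
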